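/- If (X,f) is a dynamical system with X a compact metric space and (X,f) has the specification property, then (X,f) has the infinite specification property. -/
import Mathlib


/-- The (finite) specification property. -/
def SpecificationProperty {X : Type*} [MetricSpace X] (f : X → X) : Prop :=
  ∀ δ : ℝ, 0 < δ → ∃ N : ℕ, ∀ n : ℕ, ∀ x : Fin n → X, ∀ a b : Fin n → ℕ,
    (∀ i : Fin n, a i ≤ b i) →
    (∀ i j : Fin n, (i : ℕ) + 1 = (j : ℕ) → b i + N ≤ a j) →
    ∃ p : X, ∀ i : Fin n, ∀ j : ℕ, a i ≤ j → j ≤ b i →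
      dist (f^[j] p) (f^[j] (x i)) < δ

/-- The infinite specification property. -/
def InfiniteSpecificationProperty {X : Type*} [MetricSpace X] (f : X → X) : Prop :=
  ∀ δ : ℝ, 0 < δ → ∃ N : ℕ, ∀ x : ℕ → X, ∀ a b : ℕ → ℕ,
    (∀ i : ℕ, a i ≤ b i) →
    (∀ i : ℕ, b i + N ≤ a (i + 1)) →
    ∃ p : X, ∀ i : ℕ, ∀ j : ℕ, a i ≤ j → j ≤ b i →
      dist (f^[j] p) (f^[j] (x i)) < δ

theorem sp_implies_isp_of_compact {X : Type*} [MetricSpace X] [CompactSpace X] (f : X → X)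
    (hf : Continuous f) (hsurj : Function.Surjective f)
    (h : SpecificationProperty f) : InfiniteSpecificationProperty f := by
  intro δ hδ
  obtain ⟨N, hN⟩ := h (δ / 2) (by linarith)
  refine ⟨N, ?_⟩
  intro x a b ha hab
  have key : ∀ n : ℕ, ∃ p : X, ∀ i : Fin n, ∀ j : ℕ, a i ≤ j → j ≤ b i →
      dist (f^[j] p) (f^[j] (x i)) < δ / 2 := by
    intro n
    exact hN n (fun i => x i) (fun i => a i) (fun i => b i)
      (fun i => ha i) (fun i j hij => by show b i.val + N ≤ a j.val; rw [← hij]; exact hab i)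
  choose q hq using key
  obtain ⟨p, -, φ, hφ, hconv⟩ :=
    isCompact_univ.tendsto_subseq (x := q) (fun n => Set.mem_univ _)
  refine ⟨p, ?_⟩
  intro i j hja hjb
  have hc : Filter.Tendsto (fun n => dist (f^[j] (q (φ n))) (f^[j] (x i))) Filter.atTop
      (nhds (dist (f^[j] p) (f^[j] (x i)))) :=
    (((hf.iterate j).continuousAt.tendsto).comp hconv).dist tendsto_const_nhds
  have hle : dist (f^[j] p) (f^[j] (x i)) ≤ δ / 2 := by
    refine le_of_tendsto hc ?_
    filter_upwards [Filter.eventually_ge_atTop (i + 1)] with n hn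
    have hi : i < φ n := lt_of_lt_of_le (Nat.lt_of_lt_of_le (Nat.lt_succ_self i) hn) hφ.le_apply
    exact le_of_lt (hq (φ n) ⟨i, hi⟩ j hja hjb)
  linarith
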